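/- Let H be an n×n real symmetric matrix with eigenvalues λ_1 ≤ ⋯ ≤ λ_n (counted with multiplicity) and corresponding orthonormal eigenvectors φ_1, …, φ_n, let 1 ≤ N < n and β > 0, and let μ ∈ ℝ satisfy Σ_{i=1}^n (1 + exp(β(λ_i − μ)))⁻¹ = N. Set ρ_i = (1 + exp(β(λ_i − μ)))⁻¹ and P_{β,∞} = Σ_{i=1}^n ρ_i φ_iφ_iᵀ. Then P_{β,∞} ∈ C_N, and for every P ∈ C_N one has E_β(P) ≥ E_β(P_{β,∞}), with equality if and only if P = P_{β,∞}. -/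

import Mathlib

open Matrix BigOperators Real

open scoped Classical in
/-- The Fermi–Dirac entropy `S(P) = ∑_i (σ_i ln σ_i + (1−σ_i) ln(1−σ_i))` of a
symmetric matrix, computed from its eigenvalues `σ_i` (with `0 ln 0 = 0`,
which holds automatically since `Real.log 0 = 0`). -/
noncomputable def matEntropy {n : ℕ} (P : Matrix (Fin n) (Fin n) ℝ) : ℝ :=
  if h : P.IsHermitian then
    ∑ i, (h.eigenvalues i * Real.log (h.eigenvalues i) +
      (1 - h.eigenvalues i) * Real.log (1 - h.eigenvalues i))
  else 0

/-- The free energy at inverse temperature `β`: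
`E_β(P) = tr(HP) + β⁻¹ S(P)`. -/
noncomputable def freeEnergy {n : ℕ} (β : ℝ) (H P : Matrix (Fin n) (Fin n) ℝ) : ℝ :=
  (H * P).trace + β⁻¹ * matEntropy P

/-- The convex set of admissible density matrices: symmetric, trace `N`,
with both `P` and `1 - P` positive semidefinite. -/
def CN (n N : ℕ) : Set (Matrix (Fin n) (Fin n) ℝ) :=
  {P | P.IsSymm ∧ P.trace = (N : ℝ) ∧ P.PosSemidef ∧
    ((1 : Matrix (Fin n) (Fin n) ℝ) - P).PosSemidef}


namespace Stmt6Aux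
variable {n : ℕ}

def ON (v : Fin n → Fin n → ℝ) : Prop := ∀ i j, v i ⬝ᵥ v j = if i = j then (1:ℝ) else 0

lemma isHermitian_of_isSymm {A : Matrix (Fin n) (Fin n) ℝ} (h : A.IsSymm) : A.IsHermitian := by
  unfold Matrix.IsHermitian; rw [Matrix.conjTranspose_eq_transpose_of_trivial]; exact h

lemma mul_vecMulVec (A : Matrix (Fin n) (Fin n) ℝ) (u v : Fin n → ℝ) :
    A * vecMulVec u v = vecMulVec (A *ᵥ u) v := by
  ext a b
  simp only [Matrix.mul_apply, vecMulVec_apply, Matrix.mulVec, dotProduct, Finset.sum_mul]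
  exact Finset.sum_congr rfl fun k _ => by ring

lemma vecMulVec_mulVec (u v x : Fin n → ℝ) :
    vecMulVec u v *ᵥ x = (v ⬝ᵥ x) • u := by
  ext a
  simp only [Matrix.mulVec, vecMulVec_apply, dotProduct, Pi.smul_apply, smul_eq_mul,
    Finset.sum_mul]
  exact Finset.sum_congr rfl fun k _ => by ring

lemma vecMulVec_smul (c : ℝ) (u v : Fin n → ℝ) :
    vecMulVec (c • u) v = c • vecMulVec u v := by
  ext a b; simp [vecMulVec_apply, mul_assoc]

lemma dot_sum {ι : Type*} (s : Finset ι) (x : Fin n → ℝ) (f : ι → Fin n → ℝ) :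
    x ⬝ᵥ (∑ i ∈ s, f i) = ∑ i ∈ s, x ⬝ᵥ f i := by
  simp only [dotProduct, Finset.sum_apply, Finset.mul_sum]
  exact Finset.sum_comm

lemma sum_mulVec {ι : Type*} (s : Finset ι) (M : ι → Matrix (Fin n) (Fin n) ℝ) (x : Fin n → ℝ) :
    (∑ i ∈ s, M i) *ᵥ x = ∑ i ∈ s, M i *ᵥ x := by
  ext a
  simp only [Matrix.mulVec, dotProduct, Finset.sum_apply, Matrix.sum_apply, Finset.sum_mul]
  exact Finset.sum_comm

lemma sum_vecMulVec_eq_one {v : Fin n → Fin n → ℝ} (h : ON v) :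
    ∑ i, vecMulVec (v i) (v i) = 1 := by
  classical
  set U : Matrix (Fin n) (Fin n) ℝ := Matrix.of (fun i j => v i j) with hU
  have h1 : U * Uᵀ = 1 := by
    ext i j
    simpa [hU, Matrix.mul_apply, Matrix.one_apply, dotProduct] using h i j
  have h2 : Uᵀ * U = 1 := mul_eq_one_comm.mp h1
  ext a b
  simpa [hU, Matrix.mul_apply, vecMulVec_apply, Matrix.sum_apply, mul_comm] using
    congrFun (congrFun h2 a) b

lemma parseval {v : Fin n → Fin n → ℝ} (h : ON v) (x : Fin n → ℝ) :
    ∑ i, (v i ⬝ᵥ x)^2 = x ⬝ᵥ x := by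
  have h2 : x ⬝ᵥ ((∑ i, vecMulVec (v i) (v i)) *ᵥ x) = x ⬝ᵥ x := by
    rw [sum_vecMulVec_eq_one h]; simp
  conv_rhs => rw [← h2, sum_mulVec, dot_sum]
  refine Finset.sum_congr rfl fun i _ => ?_
  rw [vecMulVec_mulVec, dotProduct_smul, smul_eq_mul, dotProduct_comm x (v i), sq]

lemma ext_of_on {v : Fin n → Fin n → ℝ} (h : ON v) {M N : Matrix (Fin n) (Fin n) ℝ}
    (hMN : ∀ j, M *ᵥ v j = N *ᵥ v j) : M = N := by
  have h1 := sum_vecMulVec_eq_one h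
  calc M = M * (∑ i, vecMulVec (v i) (v i)) := by rw [h1, mul_one]
    _ = N * (∑ i, vecMulVec (v i) (v i)) := by
        rw [Finset.mul_sum, Finset.mul_sum]
        refine Finset.sum_congr rfl fun i _ => ?_
        rw [mul_vecMulVec, mul_vecMulVec, hMN]
    _ = N := by rw [h1, mul_one]

noncomputable def fent (x : ℝ) : ℝ := x * Real.log x + (1 - x) * Real.log (1 - x)

lemma gibbs_scalar {a b : ℝ} (ha : 0 ≤ a) (hb : 0 < b) :
    a - b ≤ a * (Real.log a - Real.log b) ∧
      (a - b = a * (Real.log a - Real.log b) ↔ a = b) := by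
  rcases eq_or_lt_of_le ha with h0 | h0
  · constructor
    · simp [← h0]; linarith
    · constructor
      · intro h; simp [← h0] at h; linarith
      · intro h; exfalso; rw [← h] at hb; exact absurd h0.symm hb.ne'
  · have hba : 0 < b / a := div_pos hb h0
    have key : Real.log (b / a) ≤ b / a - 1 := Real.log_le_sub_one_of_pos hba
    have hlog : Real.log (b / a) = Real.log b - Real.log a := Real.log_div hb.ne' h0.ne'
    constructor
    · have := mul_le_mul_of_nonneg_left key h0.le
      rw [hlog] at this
      have h2 : a * (b / a - 1) = b - a := by field_simp
      nlinarith
    · constructor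
      · intro h
        by_contra hne
        have hne' : b / a ≠ 1 := by
          intro hh; apply hne; field_simp at hh; linarith
        have key' : Real.log (b / a) < b / a - 1 := Real.log_lt_sub_one_of_pos hba hne'
        rw [hlog] at key'
        have := mul_lt_mul_of_pos_left key' h0
        have h2 : a * (b / a - 1) = b - a := by field_simp
        nlinarith
      · intro h; rw [h]; ring

lemma klein_scalar {r x : ℝ} (hr0 : 0 < r) (hr1 : r < 1) (hx0 : 0 ≤ x) (hx1 : x ≤ 1) :
    0 ≤ fent x - fent r - (Real.log r - Real.log (1 - r)) * (x - r) ∧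
      (fent x - fent r - (Real.log r - Real.log (1 - r)) * (x - r) = 0 ↔ x = r) := by
  have h1 : (0:ℝ) < 1 - r := by linarith
  have hx1' : (0:ℝ) ≤ 1 - x := by linarith
  obtain ⟨g1, g1e⟩ := gibbs_scalar hx0 hr0
  obtain ⟨g2, g2e⟩ := gibbs_scalar hx1' h1
  have hid : fent x - fent r - (Real.log r - Real.log (1 - r)) * (x - r) =
      (x * (Real.log x - Real.log r) - (x - r)) +
      ((1 - x) * (Real.log (1 - x) - Real.log (1 - r)) - ((1 - x) - (1 - r))) := by
    simp only [fent]; ring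
  constructor
  · rw [hid]; nlinarith
  · rw [hid]
    constructor
    · intro h
      exact g1e.mp (by linarith)
    · intro h; rw [h]; ring

lemma exists_eigen {A : Matrix (Fin n) (Fin n) ℝ} (hA : A.IsHermitian) :
    ∃ ψ : Fin n → Fin n → ℝ, ON ψ ∧ ∀ j, A *ᵥ ψ j = hA.eigenvalues j • ψ j := by
  classical
  refine ⟨fun j => (hA.eigenvectorBasis j : Fin n → ℝ), ?_, fun j => hA.mulVec_eigenvectorBasis j⟩
  intro i j
  have h := hA.eigenvectorBasis.orthonormal
  rw [orthonormal_iff_ite] at h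
  have h2 := h i j
  rw [PiLp.inner_apply] at h2
  simpa [dotProduct, mul_comm] using h2

lemma symm_dot {A : Matrix (Fin n) (Fin n) ℝ} (hA : A.IsSymm) (u w : Fin n → ℝ) :
    (A *ᵥ u) ⬝ᵥ w = u ⬝ᵥ (A *ᵥ w) := by
  simp only [dotProduct, Matrix.mulVec, dotProduct, Finset.sum_mul, Finset.mul_sum]
  rw [Finset.sum_comm]
  refine Finset.sum_congr rfl fun a _ => Finset.sum_congr rfl fun b _ => ?_
  rw [← hA.apply a b]
  ring

/-- Orthogonality of eigenvectors for distinct eigenvalues. -/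
lemma eig_orth {A : Matrix (Fin n) (Fin n) ℝ} (hA : A.IsSymm) {u w : Fin n → ℝ} {d s : ℝ}
    (hu : A *ᵥ u = d • u) (hw : A *ᵥ w = s • w) (hds : d ≠ s) : u ⬝ᵥ w = 0 := by
  have h1 : (A *ᵥ u) ⬝ᵥ w = d * (u ⬝ᵥ w) := by rw [hu, smul_dotProduct, smul_eq_mul]
  have h2 : u ⬝ᵥ (A *ᵥ w) = s * (u ⬝ᵥ w) := by rw [hw, dotProduct_smul, smul_eq_mul]
  have h3 := symm_dot hA u w
  rw [h1, h2] at h3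
  by_contra hne
  exact hds (mul_right_cancel₀ hne h3)

/-- Spectral transfer: two orthonormal eigenbases give equal spectral sums. -/
lemma sum_transfer {A : Matrix (Fin n) (Fin n) ℝ} (hA : A.IsSymm)
    {v ψ : Fin n → Fin n → ℝ} (hv : ON v) (hψ : ON ψ) {d s : Fin n → ℝ}
    (hvd : ∀ i, A *ᵥ v i = d i • v i) (hψs : ∀ j, A *ᵥ ψ j = s j • ψ j)
    (g : ℝ → ℝ) : ∑ j, g (s j) = ∑ i, g (d i) := by
  have key : ∀ i j, (v i ⬝ᵥ ψ j)^2 * g (s j) = (v i ⬝ᵥ ψ j)^2 * g (d i) := by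
    intro i j
    by_cases hds : d i = s j
    · rw [hds]
    · rw [eig_orth hA (hvd i) (hψs j) hds]; ring
  calc ∑ j, g (s j) = ∑ j, (∑ i, (v i ⬝ᵥ ψ j)^2) * g (s j) := by
        refine Finset.sum_congr rfl fun j _ => ?_
        rw [parseval hv, hψ j j, if_pos rfl, one_mul]
    _ = ∑ i, ∑ j, (v i ⬝ᵥ ψ j)^2 * g (s j) := by
        rw [Finset.sum_comm]
        exact Finset.sum_congr rfl fun j _ => by rw [Finset.sum_mul]
    _ = ∑ i, ∑ j, (v i ⬝ᵥ ψ j)^2 * g (d i) := by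
        exact Finset.sum_congr rfl fun i _ => Finset.sum_congr rfl fun j _ => key i j
    _ = ∑ i, g (d i) := by
        refine Finset.sum_congr rfl fun i _ => ?_
        rw [← Finset.sum_mul]
        have : ∑ j, (v i ⬝ᵥ ψ j)^2 = 1 := by
          have := parseval hψ (v i)
          rw [hv i i, if_pos rfl] at this
          rw [← this]
          exact Finset.sum_congr rfl fun j _ => by rw [dotProduct_comm]
        rw [this, one_mul]
    


lemma basis_expansion {v : Fin n → Fin n → ℝ} (h : ON v) (x : Fin n → ℝ) :
    ∑ i, (v i ⬝ᵥ x) • v i = x := by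
  have h2 : (∑ i, vecMulVec (v i) (v i)) *ᵥ x = x := by
    rw [sum_vecMulVec_eq_one h]; simp
  conv_rhs => rw [← h2, sum_mulVec]
  exact Finset.sum_congr rfl fun i _ => (vecMulVec_mulVec _ _ _).symm

lemma sum_smul_vecMulVec_mulVec {v : Fin n → Fin n → ℝ} (h : ON v) (c : Fin n → ℝ) (k : Fin n) :
    (∑ i, c i • vecMulVec (v i) (v i)) *ᵥ v k = c k • v k := by
  rw [sum_mulVec]
  have key : ∀ i, (c i • vecMulVec (v i) (v i)) *ᵥ v k
      = (if i = k then c k • v k else 0) := by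
    intro i
    rw [Matrix.smul_mulVec, vecMulVec_mulVec, h i k]
    by_cases hik : i = k
    · subst hik; simp
    · simp [hik]
  rw [Finset.sum_congr rfl fun i _ => key i]
  simp

lemma quad_form {v : Fin n → Fin n → ℝ} (h : ON v) (c : Fin n → ℝ) (x : Fin n → ℝ) :
    x ⬝ᵥ ((∑ i, c i • vecMulVec (v i) (v i)) *ᵥ x) = ∑ i, c i * (v i ⬝ᵥ x)^2 := by
  rw [sum_mulVec, dot_sum]
  refine Finset.sum_congr rfl fun i _ => ?_
  rw [Matrix.smul_mulVec, vecMulVec_mulVec, dotProduct_smul, dotProduct_smul,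
    smul_eq_mul, smul_eq_mul, dotProduct_comm x (v i), sq]

lemma isSymm_sum {v : Fin n → Fin n → ℝ} (c : Fin n → ℝ) :
    (∑ i, c i • vecMulVec (v i) (v i)).IsSymm := by
  rw [Matrix.IsSymm]
  ext a b
  simp [Matrix.transpose_apply, Matrix.sum_apply, vecMulVec_apply, mul_comm, mul_left_comm]

lemma psd_sum {v : Fin n → Fin n → ℝ} (h : ON v) {c : Fin n → ℝ} (hc : ∀ i, 0 ≤ c i) :
    (∑ i, c i • vecMulVec (v i) (v i)).PosSemidef := by
  refine Matrix.PosSemidef.of_dotProduct_mulVec_nonneg ?_ ?_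
  · exact isHermitian_of_isSymm (isSymm_sum c)
  · intro x
    have hsx : star x = x := by
      funext a; exact star_trivial _
    rw [hsx, quad_form h]
    exact Finset.sum_nonneg fun i _ => mul_nonneg (hc i) (sq_nonneg _)

lemma trace_vecMulVec (u v : Fin n → ℝ) : (vecMulVec u v).trace = u ⬝ᵥ v := by
  simp [Matrix.trace, vecMulVec_apply, dotProduct, Matrix.diag]

lemma trace_vecMulVec_mul (u v : Fin n → ℝ) (P : Matrix (Fin n) (Fin n) ℝ) :
    (vecMulVec u v * P).trace = v ⬝ᵥ (P *ᵥ u) := by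
  simp only [Matrix.trace, Matrix.diag, Matrix.mul_apply, vecMulVec_apply, dotProduct,
    Matrix.mulVec, Finset.mul_sum]
  rw [Finset.sum_comm]
  exact Finset.sum_congr rfl fun a _ => Finset.sum_congr rfl fun b _ => by ring

end Stmt6Aux

open Stmt6Aux

/-- The Fermi–Dirac density matrix
`P_{β,∞} = ∑_i (1 + e^{β(λ_i−μ)})⁻¹ φ_i φ_iᵀ` belongs to `C_N` and is the
unique minimizer of the free energy `E_β` over `C_N`. -/
theorem stmt6 {n N : ℕ} (hN1 : 1 ≤ N) (hNn : N < n)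
    (H : Matrix (Fin n) (Fin n) ℝ) (hH : H.IsSymm)
    (lam : Fin n → ℝ) (hmono : Monotone lam)
    (φ : Fin n → Fin n → ℝ)
    (horth : ∀ i j, φ i ⬝ᵥ φ j = if i = j then (1 : ℝ) else 0)
    (heig : ∀ i, H.mulVec (φ i) = lam i • φ i)
    (β : ℝ) (hβ : 0 < β) (μ : ℝ)
    (hμ : ∑ i, (1 + Real.exp (β * (lam i - μ)))⁻¹ = (N : ℝ))
    (ρ : Fin n → ℝ) (hρ : ∀ i, ρ i = (1 + Real.exp (β * (lam i - μ)))⁻¹)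
    (Pβ : Matrix (Fin n) (Fin n) ℝ)
    (hPβ : Pβ = ∑ i, ρ i • vecMulVec (φ i) (φ i)) :
    Pβ ∈ CN n N ∧
      ∀ P ∈ CN n N, freeEnergy β H Pβ ≤ freeEnergy β H P ∧
        (freeEnergy β H P = freeEnergy β H Pβ ↔ P = Pβ) := by
  classical
  have hβ' : β ≠ 0 := hβ.ne'
  have hφ : ON φ := horth
  -- basic facts about ρ
  have hρ0 : ∀ i, 0 < ρ i := fun i => by
    rw [hρ i]; positivity
  have hρ1 : ∀ i, ρ i < 1 := fun i => by
    rw [hρ i]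
    have h1 : (1:ℝ) < 1 + Real.exp (β * (lam i - μ)) := by
      have := Real.exp_pos (β * (lam i - μ)); linarith
    exact inv_lt_one_of_one_lt₀ h1
  have hρsum : ∑ i, ρ i = (N:ℝ) := by
    rw [Finset.sum_congr rfl fun i _ => hρ i]; exact hμ
  -- the slope c i
  have hci : ∀ i, Real.log (ρ i) - Real.log (1 - ρ i) = -(β * (lam i - μ)) := by
    intro i
    have he : (0:ℝ) < Real.exp (β * (lam i - μ)) := Real.exp_pos _
    have h1 : (0:ℝ) < 1 + Real.exp (β * (lam i - μ)) := by linarith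
    have h2 : (1:ℝ) - (1 + Real.exp (β * (lam i - μ)))⁻¹
        = Real.exp (β * (lam i - μ)) * (1 + Real.exp (β * (lam i - μ)))⁻¹ := by
      field_simp
      ring
    rw [hρ i, h2, Real.log_inv, Real.log_mul he.ne' (inv_ne_zero h1.ne'), Real.log_inv,
      Real.log_exp]
    ring
  -- Pβ facts
  have hPβeig : ∀ k, Pβ *ᵥ φ k = ρ k • φ k := by
    rw [hPβ]; exact fun k => sum_smul_vecMulVec_mulVec hφ ρ k
  have hPβsymm : Pβ.IsSymm := hPβ ▸ isSymm_sum ρ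
  have hPβh : Pβ.IsHermitian := isHermitian_of_isSymm hPβsymm
  have hPβtr : Pβ.trace = (N:ℝ) := by
    rw [hPβ, Matrix.trace_sum, ← hρsum]
    refine Finset.sum_congr rfl fun i _ => ?_
    rw [Matrix.trace_smul, Stmt6Aux.trace_vecMulVec, hφ i i, if_pos rfl, smul_eq_mul, mul_one]
  have hPβpsd : Pβ.PosSemidef := hPβ ▸ psd_sum hφ (fun i => (hρ0 i).le)
  have hone : (1 : Matrix (Fin n) (Fin n) ℝ) - Pβ = ∑ i, (1 - ρ i) • vecMulVec (φ i) (φ i) := by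
    rw [hPβ, ← sum_vecMulVec_eq_one hφ, ← Finset.sum_sub_distrib]
    refine Finset.sum_congr rfl fun i _ => ?_
    rw [sub_smul, one_smul]
  have hPβpsd1 : ((1 : Matrix (Fin n) (Fin n) ℝ) - Pβ).PosSemidef := by
    rw [hone]; exact psd_sum hφ (fun i => by have := hρ1 i; linarith)
  have hPβCN : Pβ ∈ CN n N := ⟨hPβsymm, hPβtr, hPβpsd, hPβpsd1⟩
  -- decomposition of H and trace formula
  have hHdec : H = ∑ i, lam i • vecMulVec (φ i) (φ i) :=
    ext_of_on hφ fun k => by rw [heig k, sum_smul_vecMulVec_mulVec hφ]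
  have htr : ∀ M : Matrix (Fin n) (Fin n) ℝ,
      (H * M).trace = ∑ i, lam i * (φ i ⬝ᵥ (M *ᵥ φ i)) := by
    intro M
    conv_lhs => rw [hHdec]
    rw [Finset.sum_mul, Matrix.trace_sum]
    refine Finset.sum_congr rfl fun i _ => ?_
    rw [Matrix.smul_mul, Matrix.trace_smul, trace_vecMulVec_mul, smul_eq_mul]
  have htrPβ : (H * Pβ).trace = ∑ i, lam i * ρ i := by
    rw [htr Pβ]
    refine Finset.sum_congr rfl fun i _ => ?_
    rw [hPβeig i, dotProduct_smul, smul_eq_mul, hφ i i, if_pos rfl, mul_one]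
  -- entropy of Pβ
  have entPβ : matEntropy Pβ = ∑ i, fent (ρ i) := by
    obtain ⟨ψ', hψ'on, hψ'eig⟩ := exists_eigen hPβh
    rw [matEntropy, dif_pos hPβh]
    simpa only [fent] using sum_transfer hPβsymm hφ hψ'on hPβeig hψ'eig fent
  refine ⟨hPβCN, fun P hP => ?_⟩
  obtain ⟨hPs, hPtr, hPpsd, hPpsd1⟩ := hP
  have hPh : P.IsHermitian := hPpsd.1
  obtain ⟨ψ, hψon, hψeig⟩ := exists_eigen hPh
  -- eigenvalue bounds
  have hσval : ∀ j, ψ j ⬝ᵥ (P *ᵥ ψ j) = hPh.eigenvalues j := fun j => by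
    rw [hψeig j, dotProduct_smul, smul_eq_mul, hψon j j, if_pos rfl, mul_one]
  have hstar : ∀ x : Fin n → ℝ, star x = x := fun x => funext fun a => star_trivial _
  have hσ0 : ∀ j, 0 ≤ hPh.eigenvalues j := fun j => by
    have h := hPpsd.dotProduct_mulVec_nonneg (ψ j)
    rwa [hstar, hσval j] at h
  have hσ1 : ∀ j, hPh.eigenvalues j ≤ 1 := fun j => by
    have h := hPpsd1.dotProduct_mulVec_nonneg (ψ j)
    rw [hstar, Matrix.sub_mulVec, Matrix.one_mulVec, dotProduct_sub, hσval j,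
      hψon j j, if_pos rfl] at h
    linarith
  have entP : matEntropy P = ∑ j, fent (hPh.eigenvalues j) := by
    rw [matEntropy, dif_pos hPh]
    simp only [fent]
  -- decomposition of P
  have hPdec : P = ∑ j, hPh.eigenvalues j • vecMulVec (ψ j) (ψ j) :=
    ext_of_on hψon fun k => by rw [hψeig k, sum_smul_vecMulVec_mulVec hψon]
  -- quadratic forms
  have hqw : ∀ i, φ i ⬝ᵥ (P *ᵥ φ i) = ∑ j, hPh.eigenvalues j * (ψ j ⬝ᵥ φ i)^2 := fun i => by
    conv_lhs => rw [hPdec]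
    exact quad_form hψon _ (φ i)
  have hrowsum : ∀ i, ∑ j, (ψ j ⬝ᵥ φ i)^2 = 1 := fun i => by
    rw [parseval hψon (φ i), hφ i i, if_pos rfl]
  have hcolsum : ∀ j, ∑ i, (ψ j ⬝ᵥ φ i)^2 = 1 := fun j => by
    rw [Finset.sum_congr rfl fun i _ => by rw [dotProduct_comm (ψ j) (φ i)],
      parseval hφ (ψ j), hψon j j, if_pos rfl]
  have hsumq : ∑ i, φ i ⬝ᵥ (P *ᵥ φ i) = (N:ℝ) := by
    have htrP : ∑ j, hPh.eigenvalues j = (N:ℝ) := by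
      have h1 : P.trace = ∑ j, hPh.eigenvalues j := by
        conv_lhs => rw [hPdec]
        rw [Matrix.trace_sum]
        refine Finset.sum_congr rfl fun j _ => ?_
        rw [Matrix.trace_smul, Stmt6Aux.trace_vecMulVec, hψon j j, if_pos rfl, smul_eq_mul, mul_one]
      rw [← h1, hPtr]
    rw [Finset.sum_congr rfl fun i _ => hqw i, Finset.sum_comm, ← htrP]
    refine Finset.sum_congr rfl fun j _ => ?_
    rw [← Finset.mul_sum, hcolsum j, mul_one]
  -- Klein terms
  have hkl := fun i j => klein_scalar (hρ0 i) (hρ1 i) (hσ0 j) (hσ1 j)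
  -- the key identity
  have hexpand : ∑ i, ∑ j, (ψ j ⬝ᵥ φ i)^2 *
        (fent (hPh.eigenvalues j) - fent (ρ i)
          - (Real.log (ρ i) - Real.log (1 - ρ i)) * (hPh.eigenvalues j - ρ i))
      = (∑ j, fent (hPh.eigenvalues j)) - (∑ i, fent (ρ i))
          - ∑ i, (Real.log (ρ i) - Real.log (1 - ρ i)) * (φ i ⬝ᵥ (P *ᵥ φ i) - ρ i) := by
    have h1 : ∀ i, ∑ j, (ψ j ⬝ᵥ φ i)^2 *
          (fent (hPh.eigenvalues j) - fent (ρ i)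
            - (Real.log (ρ i) - Real.log (1 - ρ i)) * (hPh.eigenvalues j - ρ i))
        = (∑ j, (ψ j ⬝ᵥ φ i)^2 * fent (hPh.eigenvalues j)) - fent (ρ i)
            - (Real.log (ρ i) - Real.log (1 - ρ i)) * (φ i ⬝ᵥ (P *ᵥ φ i) - ρ i) := by
      intro i
      have e : ∀ j, (ψ j ⬝ᵥ φ i)^2 *
            (fent (hPh.eigenvalues j) - fent (ρ i)
              - (Real.log (ρ i) - Real.log (1 - ρ i)) * (hPh.eigenvalues j - ρ i))
          = (ψ j ⬝ᵥ φ i)^2 * fent (hPh.eigenvalues j)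
            - (ψ j ⬝ᵥ φ i)^2 * fent (ρ i)
            - (Real.log (ρ i) - Real.log (1 - ρ i)) *
                (hPh.eigenvalues j * (ψ j ⬝ᵥ φ i)^2 - ρ i * (ψ j ⬝ᵥ φ i)^2) := fun j => by ring
      rw [Finset.sum_congr rfl fun j _ => e j, Finset.sum_sub_distrib, Finset.sum_sub_distrib,
        ← Finset.sum_mul, hrowsum i, one_mul, ← Finset.mul_sum, Finset.sum_sub_distrib,
        ← hqw i, ← Finset.mul_sum, hrowsum i, mul_one]
    rw [Finset.sum_congr rfl fun i _ => h1 i, Finset.sum_sub_distrib, Finset.sum_sub_distrib,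
      Finset.sum_comm]
    congr 2
    refine Finset.sum_congr rfl fun j _ => ?_
    rw [← Finset.sum_mul, hcolsum j, one_mul]
  have key : freeEnergy β H P - freeEnergy β H Pβ
      = β⁻¹ * ∑ i, ∑ j, (ψ j ⬝ᵥ φ i)^2 *
          (fent (hPh.eigenvalues j) - fent (ρ i)
            - (Real.log (ρ i) - Real.log (1 - ρ i)) * (hPh.eigenvalues j - ρ i)) := by
    rw [hexpand, freeEnergy, freeEnergy, htr P, htrPβ, entP, entPβ]
    have h4 : β⁻¹ * ∑ i, (Real.log (ρ i) - Real.log (1 - ρ i)) * (φ i ⬝ᵥ (P *ᵥ φ i) - ρ i)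
        = ∑ i, (μ - lam i) * (φ i ⬝ᵥ (P *ᵥ φ i) - ρ i) := by
      rw [Finset.mul_sum]
      refine Finset.sum_congr rfl fun i _ => ?_
      rw [← mul_assoc, hci i]
      field_simp
      ring
    have h5 : ∑ i, (μ - lam i) * (φ i ⬝ᵥ (P *ᵥ φ i) - ρ i)
        = μ * (N:ℝ) - μ * (N:ℝ) - ∑ i, lam i * (φ i ⬝ᵥ (P *ᵥ φ i)) + ∑ i, lam i * ρ i := by
      have e : ∀ i, (μ - lam i) * (φ i ⬝ᵥ (P *ᵥ φ i) - ρ i)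
          = μ * (φ i ⬝ᵥ (P *ᵥ φ i)) - μ * ρ i
            - lam i * (φ i ⬝ᵥ (P *ᵥ φ i)) + lam i * ρ i := fun i => by ring
      rw [Finset.sum_congr rfl fun i _ => e i, Finset.sum_add_distrib, Finset.sum_sub_distrib,
        Finset.sum_sub_distrib, ← Finset.mul_sum, ← Finset.mul_sum, hsumq, hρsum]
    have h6 : β⁻¹ * ((∑ j, fent (hPh.eigenvalues j)) - (∑ i, fent (ρ i))
          - ∑ i, (Real.log (ρ i) - Real.log (1 - ρ i)) * (φ i ⬝ᵥ (P *ᵥ φ i) - ρ i))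
        = β⁻¹ * (∑ j, fent (hPh.eigenvalues j)) - β⁻¹ * (∑ i, fent (ρ i))
          - β⁻¹ * ∑ i, (Real.log (ρ i) - Real.log (1 - ρ i)) * (φ i ⬝ᵥ (P *ᵥ φ i) - ρ i) := by
      ring
    rw [h6, h4, h5]
    simp only [fent]
    ring
  -- nonnegativity of terms
  have hwgnn : ∀ i j, 0 ≤ (ψ j ⬝ᵥ φ i)^2 *
      (fent (hPh.eigenvalues j) - fent (ρ i)
        - (Real.log (ρ i) - Real.log (1 - ρ i)) * (hPh.eigenvalues j - ρ i)) :=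
    fun i j => mul_nonneg (sq_nonneg _) (hkl i j).1
  have hnn : 0 ≤ ∑ i, ∑ j, (ψ j ⬝ᵥ φ i)^2 *
      (fent (hPh.eigenvalues j) - fent (ρ i)
        - (Real.log (ρ i) - Real.log (1 - ρ i)) * (hPh.eigenvalues j - ρ i)) :=
    Finset.sum_nonneg fun i _ => Finset.sum_nonneg fun j _ => hwgnn i j
  constructor
  · nlinarith [mul_nonneg (inv_nonneg.mpr hβ.le) hnn, key]
  constructor
  · intro heq
    have hzero0 : β⁻¹ * ∑ i, ∑ j, (ψ j ⬝ᵥ φ i)^2 *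
        (fent (hPh.eigenvalues j) - fent (ρ i)
          - (Real.log (ρ i) - Real.log (1 - ρ i)) * (hPh.eigenvalues j - ρ i)) = 0 := by
      rw [← key]; linarith
    have hzero : ∑ i, ∑ j, (ψ j ⬝ᵥ φ i)^2 *
        (fent (hPh.eigenvalues j) - fent (ρ i)
          - (Real.log (ρ i) - Real.log (1 - ρ i)) * (hPh.eigenvalues j - ρ i)) = 0 :=
      (mul_eq_zero.mp hzero0).resolve_left (inv_ne_zero hβ')
    have hterm : ∀ i j, (ψ j ⬝ᵥ φ i)^2 *
        (fent (hPh.eigenvalues j) - fent (ρ i)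
          - (Real.log (ρ i) - Real.log (1 - ρ i)) * (hPh.eigenvalues j - ρ i)) = 0 := by
      have h1 := (Finset.sum_eq_zero_iff_of_nonneg
        (fun i _ => Finset.sum_nonneg fun j _ => hwgnn i j)).mp hzero
      intro i j
      have h2 := (Finset.sum_eq_zero_iff_of_nonneg (fun j _ => hwgnn i j)).mp
        (h1 i (Finset.mem_univ i))
      exact h2 j (Finset.mem_univ j)
    have hsig : ∀ i j, φ i ⬝ᵥ ψ j ≠ 0 → hPh.eigenvalues j = ρ i := by
      intro i j hne
      have hw : (ψ j ⬝ᵥ φ i)^2 ≠ 0 := by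
        rw [dotProduct_comm]; exact pow_ne_zero _ hne
      have := (mul_eq_zero.mp (hterm i j)).resolve_left hw
      exact (hkl i j).2.mp this
    refine ext_of_on hψon fun j => ?_
    rw [hψeig j, hPβ, Stmt6Aux.sum_mulVec]
    have hexp : ψ j = ∑ i, (φ i ⬝ᵥ ψ j) • φ i := (basis_expansion hφ (ψ j)).symm
    calc hPh.eigenvalues j • ψ j
        = ∑ i, (hPh.eigenvalues j * (φ i ⬝ᵥ ψ j)) • φ i := by
          conv_lhs => rw [hexp]
          rw [Finset.smul_sum]
          exact Finset.sum_congr rfl fun i _ => by rw [smul_smul]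
      _ = ∑ i, (ρ i • vecMulVec (φ i) (φ i)) *ᵥ ψ j := by
          refine Finset.sum_congr rfl fun i _ => ?_
          rw [Matrix.smul_mulVec, vecMulVec_mulVec, smul_smul]
          by_cases hne : φ i ⬝ᵥ ψ j = 0
          · rw [hne]; simp
          · rw [hsig i j hne]
  · intro heq; rw [heq]
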